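/- Let f : ℝⁿ → ℝᵐ be differentiable, let x, x' ∈ ℝⁿ, and let ℓ ∈ ℝᵐ. Then there exists s ∈ (0,1)ⁿ such that ℓᵀ(f(x) − f(x')) = ℓᵀ M_{x'}f(x, s) (x − x'), i.e., ℓᵀ(f(x) − f(x')) = Σ_{j=1}^{n} ℓᵀ (∂f/∂x_j)(x₁, …, x_{j−1}, s_j x_j + (1 − s_j) x'_j, x'_{j+1}, …, x'_n) (x_j − x'_j). -/

import Mathlib

open Filter Topology Set Matrix

/-- The mixed Jacobian matrix `M_{x'}f(x,s)`, whose `(i,j)` entry is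
`∂f_i/∂x_j(x₁, …, x_{j-1}, s_j x_j + (1-s_j) x'_j, x'_{j+1}, …, x'_n)`. -/
noncomputable def mixedJac {n m : ℕ} (f : (Fin n → ℝ) → (Fin m → ℝ)) (x' x s : Fin n → ℝ) :
    Matrix (Fin m) (Fin n) ℝ :=
  fun i j =>
    fderiv ℝ f
      (fun k => if k < j then x k else if k = j then s j * x j + (1 - s j) * x' j else x' k)
      (Pi.single j 1) i

theorem stmt4 {n m : ℕ} (f : (Fin n → ℝ) → (Fin m → ℝ)) (hf : Differentiable ℝ f)
    (x x' : Fin n → ℝ) (ℓ : Fin m → ℝ) :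
    ∃ s : Fin n → ℝ, (∀ j, s j ∈ Ioo (0:ℝ) 1) ∧
      ℓ ⬝ᵥ (f x - f x') = ℓ ⬝ᵥ (mixedJac f x' x s).mulVec (x - x') := by
  classical
  -- intermediate points
  set q : ℕ → (Fin n → ℝ) := fun J k => if (k:ℕ) < J then x k else x' k with hq
  have key : ∀ j : Fin n, ∃ σ ∈ Ioo (0:ℝ) 1,
      ℓ ⬝ᵥ f (q (j+1)) - ℓ ⬝ᵥ f (q j)
        = (ℓ ⬝ᵥ (fderiv ℝ f
            (fun k => if k < j then x k else if k = j then σ * x j + (1 - σ) * x' j else x' k)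
            (Pi.single j 1))) * (x j - x' j) := by
    intro j
    set p : ℝ → (Fin n → ℝ) := fun t k => if k < j then x k else if k = j then t else x' k with hp
    have hpderiv : ∀ t : ℝ, HasDerivAt p (Pi.single j 1) t := by
      intro t
      rw [hasDerivAt_pi]
      intro k
      rcases lt_trichotomy k j with h1 | h1 | h1
      · simpa [hp, h1, Pi.single_apply, ne_of_lt h1] using hasDerivAt_const t (x k)
      · subst h1
        simpa [hp] using hasDerivAt_id' t
      · simpa [hp, not_lt_of_gt h1, Pi.single_apply, (ne_of_gt h1)] using hasDerivAt_const t (x' k)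
    set g : ℝ → ℝ := fun t => ℓ ⬝ᵥ f (p t) with hgd
    set D : ℝ → ℝ := fun t => ℓ ⬝ᵥ (fderiv ℝ f (p t) (Pi.single j 1)) with hDd
    have hg : ∀ t : ℝ, HasDerivAt g (D t) t := by
      intro t
      have h1 : HasDerivAt (fun t => f (p t)) (fderiv ℝ f (p t) (Pi.single j 1)) t :=
        (hf (p t)).hasFDerivAt.comp_hasDerivAt t (hpderiv t)
      have h2 : ∀ i, HasDerivAt (fun t => f (p t) i)
          (fderiv ℝ f (p t) (Pi.single j 1) i) t := fun i => hasDerivAt_pi.mp h1 i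
      simp only [hgd, hDd, dotProduct]
      exact HasDerivAt.fun_sum fun i _ => (h2 i).const_mul (ℓ i)
    have hpa : p (x' j) = q (j:ℕ) := by
      funext k
      rcases lt_trichotomy k j with h1 | h1 | h1
      · simp [hp, hq, h1, Fin.lt_def.mp h1]
      · subst h1; simp [hp, hq]
      · have h2 : ¬ (k:ℕ) < (j:ℕ) := not_lt_of_gt (Fin.lt_def.mp h1)
        simp [hp, hq, not_lt_of_gt h1, (ne_of_gt h1), h2]
    have hpb : p (x j) = q ((j:ℕ)+1) := by
      funext k
      rcases lt_trichotomy k j with h1 | h1 | h1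
      · have := Fin.lt_def.mp h1
        simp [hp, hq, h1, Nat.lt_succ_of_lt this]
      · subst h1; simp [hp, hq]
      · have h2 : ¬ (k:ℕ) < (j:ℕ)+1 := by
          have := Fin.lt_def.mp h1; omega
        simp [hp, hq, not_lt_of_gt h1, (ne_of_gt h1), h2]
    -- now MVT
    rcases lt_trichotomy (x' j) (x j) with hab | hab | hab
    · obtain ⟨c, hc, hceq⟩ := exists_hasDerivAt_eq_slope g D hab
        (fun t _ => (hg t).continuousAt.continuousWithinAt) (fun t _ => hg t)
      have hne : x j - x' j ≠ 0 := sub_ne_zero.mpr (ne_of_gt hab)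
      refine ⟨(c - x' j) / (x j - x' j),
        ⟨div_pos (sub_pos.mpr hc.1) (sub_pos.mpr hab),
         (div_lt_one (sub_pos.mpr hab)).mpr (by linarith [hc.2])⟩, ?_⟩
      have hcval : (c - x' j) / (x j - x' j) * x j
          + (1 - (c - x' j) / (x j - x' j)) * x' j = c := by
        field_simp
        ring
      rw [hcval, ← hpa, ← hpb]
      show g (x j) - g (x' j) = D c * (x j - x' j)
      rw [hceq]; field_simp
    · refine ⟨1/2, ⟨by norm_num, by norm_num⟩, ?_⟩
      have : q ((j:ℕ)+1) = q (j:ℕ) := by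
        rw [← hpa, ← hpb, hab]
      rw [this, hab]
      ring
    · obtain ⟨c, hc, hceq⟩ := exists_hasDerivAt_eq_slope g D hab
        (fun t _ => (hg t).continuousAt.continuousWithinAt) (fun t _ => hg t)
      have hne : x' j - x j ≠ 0 := sub_ne_zero.mpr (ne_of_gt hab)
      have heq : (c - x' j) / (x j - x' j) = (x' j - c) / (x' j - x j) := by
        rw [← neg_div_neg_eq]; ring_nf
      refine ⟨(c - x' j) / (x j - x' j),
        ⟨by rw [heq]; exact div_pos (by linarith [hc.2]) (by linarith),
         by rw [heq]; exact (div_lt_one (by linarith)).mpr (by linarith [hc.1])⟩, ?_⟩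
      · have hne' : x j - x' j ≠ 0 := sub_ne_zero.mpr (ne_of_lt hab)
        have hcval : (c - x' j) / (x j - x' j) * x j
            + (1 - (c - x' j) / (x j - x' j)) * x' j = c := by
          field_simp
          ring
        rw [hcval, ← hpa, ← hpb]
        show g (x j) - g (x' j) = D c * (x j - x' j)
        rw [hceq]
        field_simp
        ring
  choose s hs hseq using key
  refine ⟨s, hs, ?_⟩
  have hqn : q n = x := by
    funext k; simp [hq, k.isLt]
  have hq0 : q 0 = x' := by
    funext k; simp [hq]
  have htel : ℓ ⬝ᵥ (f x - f x')
      = ∑ j : Fin n, (ℓ ⬝ᵥ f (q ((j:ℕ)+1)) - ℓ ⬝ᵥ f (q (j:ℕ))) := by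
    rw [← Finset.sum_range (fun J => ℓ ⬝ᵥ f (q (J+1)) - ℓ ⬝ᵥ f (q J)),
      Finset.sum_range_sub (fun J => ℓ ⬝ᵥ f (q J)) n, hqn, hq0]
    simp [dotProduct, Finset.sum_sub_distrib, mul_sub]
  rw [htel]
  have hR : ℓ ⬝ᵥ (mixedJac f x' x s).mulVec (x - x')
      = ∑ j : Fin n, (ℓ ⬝ᵥ (fun i => mixedJac f x' x s i j)) * (x j - x' j) := by
    simp only [dotProduct, mulVec, Finset.sum_mul, Finset.mul_sum]
    rw [Finset.sum_comm]
    refine Finset.sum_congr rfl fun j _ => Finset.sum_congr rfl fun i _ => by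
      simp [Pi.sub_apply]; ring
  rw [hR]
  exact Finset.sum_congr rfl fun j _ => by rw [hseq j]; rfl
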